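/- Let T be a tree (possibly infinite) and let X be an infinite set of vertices of T. Then either T contains a ray whose vertex set meets X in an infinite set, or T contains a subtree S such that infinitely many leaves of S belong to X. -/

import Mathlib

set_option linter.unusedSectionVars false

namespace TreeRayAux

open SimpleGraph Walk

variable {V : Type*} [DecidableEq V] {T : SimpleGraph V}

noncomputable def pa (hT : T.IsTree) (r z : V) : T.Walk r z :=
  (hT.existsUnique_path r z).exists.choose

lemma pa_isPath (hT : T.IsTree) (r z : V) : (pa hT r z).IsPath :=
  (hT.existsUnique_path r z).exists.choose_spec

lemma pa_unique (hT : T.IsTree) {r z : V} {q : T.Walk r z} (hq : q.IsPath) :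
    q = pa hT r z :=
  (hT.existsUnique_path r z).unique hq (pa_isPath hT r z)

lemma pa_takeUntil (hT : T.IsTree) {r z u : V} (h : u ∈ (pa hT r z).support) :
    pa hT r u = (pa hT r z).takeUntil u h :=
  (pa_unique hT ((pa_isPath hT r z).takeUntil h)).symm

lemma pa_support_subset (hT : T.IsTree) {r z u : V} (h : u ∈ (pa hT r z).support) :
    ∀ a ∈ (pa hT r u).support, a ∈ (pa hT r z).support := by
  rw [pa_takeUntil hT h]
  exact fun a ha => (pa hT r z).support_takeUntil_subset h ha

lemma pa_length_le (hT : T.IsTree) {r z u : V} (h : u ∈ (pa hT r z).support) :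
    (pa hT r u).length ≤ (pa hT r z).length := by
  rw [pa_takeUntil hT h]
  exact Walk.length_takeUntil_le _ h

lemma pa_antisymm (hT : T.IsTree) {r u z : V} (h1 : u ∈ (pa hT r z).support)
    (h2 : z ∈ (pa hT r u).support) : u = z := by
  have l1 := pa_length_le hT h1
  have l2 := pa_length_le hT h2
  have hlen : ((pa hT r z).dropUntil u h1).length = 0 := by
    have hc := congrArg Walk.length ((pa hT r z).take_spec h1)
    rw [Walk.length_append, ← pa_takeUntil hT h1] at hc
    omega
  have h0 := ((pa hT r z).dropUntil u h1).getVert_zero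
  have hL := ((pa hT r z).dropUntil u h1).getVert_length
  rw [hlen] at hL
  exact h0.symm.trans hL

lemma pa_self (hT : T.IsTree) (r : V) : pa hT r r = Walk.nil := by
  symm; exact pa_unique hT (Walk.IsPath.nil)

lemma isPath_concat {a b c : V} {p : T.Walk a b} (hp : p.IsPath) (h : T.Adj b c)
    (hc : c ∉ p.support) : (p.concat h).IsPath := by
  rw [← Walk.isPath_reverse_iff, Walk.reverse_concat]
  exact hp.reverse.cons (by simpa using hc)

lemma head_of_cons {a b c : V} {R : T.Walk a c} {h : T.Adj a b} {q : T.Walk b c}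
    (hR : R = Walk.cons h q) : R.support.tail.head? = some b := by
  subst hR
  rw [Walk.support_cons, List.tail_cons, q.support_eq_cons]
  rfl

lemma reachable_induce {S : Set V} : ∀ {a u : V} (q : T.Walk a u)
    (hq : ∀ b ∈ q.support, b ∈ S),
    (T.induce S).Reachable ⟨a, hq a q.start_mem_support⟩ ⟨u, hq u q.end_mem_support⟩ := by
  intro a u q
  induction q with
  | nil => exact fun _ => Reachable.refl _
  | @cons a b u h q ih =>
    intro hq
    have hq' : ∀ c ∈ q.support, c ∈ S := fun c hc => hq c (by simp [hc])
    have h1 : (T.induce S).Adj ⟨a, hq a (Walk.start_mem_support _)⟩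
        ⟨b, hq' b q.start_mem_support⟩ := by
      exact h
    exact (h1.reachable).trans (ih hq')

/-- The key lemma: a family of vertices, pairwise not on each other's root-paths,
spans a subtree in which each family member is a leaf. -/
lemma leafy (hT : T.IsTree) (X : Set V) (ρ : V) (x : ℕ → V)
    (hinj : Function.Injective x) (hmem : ∀ k, x k ∈ X) (hner : ∀ k, x k ≠ ρ)
    (hsep : ∀ j k, j ≠ k → x k ∉ (pa hT ρ (x j)).support) :
    ∃ S : Set V, S.Nonempty ∧ (T.induce S).Connected ∧
      (X ∩ {a : V | a ∈ S ∧ ∃! y, y ∈ S ∧ T.Adj a y}).Infinite := by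
  set S : Set V := ⋃ k, {a | a ∈ (pa hT ρ (x k)).support} with hS
  have hρS : ρ ∈ S := Set.mem_iUnion.2 ⟨0, (pa hT ρ (x 0)).start_mem_support⟩
  have hxS : ∀ k, x k ∈ S := fun k => Set.mem_iUnion.2 ⟨k, (pa hT ρ (x k)).end_mem_support⟩
  -- L2 : if y ∈ S and x k lies on the root-path of y, then y = x k
  have L2 : ∀ (y : V) (k : ℕ), y ∈ S → x k ∈ (pa hT ρ y).support → y = x k := by
    intro y k hy hk
    obtain ⟨j, hj⟩ := Set.mem_iUnion.1 hy
    have hkj : x k ∈ (pa hT ρ (x j)).support :=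
      pa_support_subset hT hj _ hk
    by_cases hjk : j = k
    · subst hjk
      exact (pa_antisymm hT hk hj).symm
    · exact absurd hkj (hsep j k hjk)
  refine ⟨S, ⟨ρ, hρS⟩, ?_, ?_⟩
  · -- connectivity
    rw [SimpleGraph.connected_iff]
    refine ⟨?_, ⟨⟨ρ, hρS⟩⟩⟩
    have key : ∀ (u : V) (hu : u ∈ S), (T.induce S).Reachable ⟨ρ, hρS⟩ ⟨u, hu⟩ := by
      intro u hu
      obtain ⟨k, hk⟩ := Set.mem_iUnion.1 hu
      have hsub : ∀ b ∈ ((pa hT ρ (x k)).takeUntil u hk).support, b ∈ S := by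
        intro b hb
        exact Set.mem_iUnion.2 ⟨k, (pa hT ρ (x k)).support_takeUntil_subset hk hb⟩
      exact reachable_induce ((pa hT ρ (x k)).takeUntil u hk) hsub
    intro u w
    exact (key u.1 u.2).symm.trans (key w.1 w.2)
  · -- infinitely many leaves in X
    apply Set.infinite_of_injective_forall_mem hinj
    intro k
    refine ⟨hmem k, hxS k, ?_⟩
    -- the unique neighbour of x k in S
    obtain ⟨y₀, hadj, q, hq⟩ := Walk.exists_eq_cons_of_ne (Ne.symm (Ne.symm (hner k)))
      ((pa hT ρ (x k)).reverse)
    have hy₀mem : y₀ ∈ (pa hT ρ (x k)).support := by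
      have : y₀ ∈ ((pa hT ρ (x k)).reverse).support := by
        rw [hq]; simp
      simpa using this
    have hy₀S : y₀ ∈ S := Set.mem_iUnion.2 ⟨k, hy₀mem⟩
    refine ⟨y₀, ⟨hy₀S, hadj⟩, ?_⟩
    rintro y' ⟨hy'S, hy'adj⟩
    -- x k does not lie on the root-path of y'
    have hnot : x k ∉ (pa hT ρ y').support := by
      intro hmem'
      have := L2 y' k hy'S hmem'
      subst this
      exact T.irrefl hy'adj
    -- hence pa ρ (x k) = (pa ρ y').concat
    have hpath : ((pa hT ρ y').concat hy'adj.symm).IsPath :=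
      isPath_concat (pa_isPath hT ρ y') hy'adj.symm hnot
    have heq : (pa hT ρ y').concat hy'adj.symm = pa hT ρ (x k) := pa_unique hT hpath
    -- compare via reversed walks
    have h1 : ((pa hT ρ (x k)).reverse).support.tail.head? = some y₀ := head_of_cons hq
    have h2 : ((pa hT ρ (x k)).reverse).support.tail.head? = some y' := by
      rw [← heq, Walk.reverse_concat]
      exact head_of_cons rfl
    rw [h1] at h2
    exact (Option.some.inj h2).symm

end TreeRayAux

open SimpleGraph TreeRayAux in
/-- Let `T` be a (possibly infinite) tree and `X` an infinite set of vertices.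
Then either `T` contains a ray meeting `X` in an infinite set, or `T` contains a
subtree `S` such that infinitely many leaves of `S` belong to `X`. -/
theorem tree_ray_or_leafy_subtree {V : Type*}
    (T : SimpleGraph V) (hT : T.IsTree) (X : Set V) (hX : X.Infinite) :
    (∃ f : ℕ → V, Function.Injective f ∧ (∀ n, T.Adj (f n) (f (n + 1))) ∧
        (X ∩ Set.range f).Infinite) ∨
      (∃ S : Set V, S.Nonempty ∧ (T.induce S).Connected ∧
        (X ∩ {x : V | x ∈ S ∧ ∃! y, y ∈ S ∧ T.Adj x y}).Infinite) := by
  classical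
  obtain ⟨r, hr⟩ := hX.nonempty
  set Below : V → Set V := fun v => X ∩ {z | v ∈ (pa hT r z).support} with hBelowDef
  by_cases hstep : ∀ v : V, (Below v).Infinite →
      ∃ w, T.Adj v w ∧ w ∉ (pa hT r v).support ∧ (Below w).Infinite
  · -- every "good" vertex can be extended: build a ray
    have hGr : (Below r).Infinite := by
      apply Set.Infinite.mono _ hX
      intro z hz; exact ⟨hz, (pa hT r z).start_mem_support⟩
    set step : {v : V // (Below v).Infinite} → {v : V // (Below v).Infinite} :=
      fun s => ⟨(hstep s.1 s.2).choose, (hstep s.1 s.2).choose_spec.2.2⟩ with hstepdef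
    set F : ℕ → {v : V // (Below v).Infinite} := fun n => step^[n] ⟨r, hGr⟩ with hF
    set v : ℕ → V := fun n => (F n).1 with hvdef
    have good : ∀ n, (Below (v n)).Infinite := fun n => (F n).2
    have hv0 : v 0 = r := rfl
    have hFs : ∀ n, F (n+1) = step (F n) := fun n => Function.iterate_succ_apply' step n _
    have hsucc : ∀ n, v (n+1) = (hstep (v n) (good n)).choose := by
      intro n
      show (F (n+1)).1 = _
      rw [hFs n]
    have hadj : ∀ n, T.Adj (v n) (v (n+1)) := by
      intro n
      rw [hsucc n]
      exact (hstep (v n) (good n)).choose_spec.1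
    have hnotmem : ∀ n, v (n+1) ∉ (pa hT r (v n)).support := by
      intro n
      rw [hsucc n]
      exact (hstep (v n) (good n)).choose_spec.2.1
    have hconcat : ∀ n, pa hT r (v (n+1)) = (pa hT r (v n)).concat (hadj n) :=
      fun n => (pa_unique hT (isPath_concat (pa_isPath hT r (v n)) (hadj n) (hnotmem n))).symm
    have hlen : ∀ n, (pa hT r (v n)).length = n := by
      intro n
      induction n with
      | zero =>
        rw [hv0, pa_self]
        rfl
      | succ n ih => rw [hconcat n, Walk.length_concat, ih]
    have hvinj : Function.Injective v := by
      intro n m hnm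
      have h1 := hlen n
      rw [hnm, hlen m] at h1
      omega
    have hsupp : ∀ n, ∀ a ∈ (pa hT r (v n)).support, a ∈ Set.range v := by
      intro n
      induction n with
      | zero =>
        intro a ha
        rw [hv0, pa_self] at ha
        simp only [Walk.support_nil, List.mem_singleton] at ha
        exact ⟨0, by rw [hv0, ha]⟩
      | succ n ih =>
        intro a ha
        rw [hconcat n, Walk.support_concat] at ha
        rw [List.mem_append] at ha
        rcases ha with ha | ha
        · exact ih a ha
        · rw [List.mem_singleton] at ha
          exact ⟨n+1, ha.symm⟩
    by_cases hrayX : (X ∩ Set.range v).Infinite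
    · exact Or.inl ⟨v, hvinj, hadj, hrayX⟩
    · right
      rw [Set.not_infinite] at hrayX
      set d : V → ℕ := fun z =>
        Nat.findGreatest (fun n => v n ∈ (pa hT r z).support) (pa hT r z).length with hdDef
      have hd1 : ∀ z n, v n ∈ (pa hT r z).support → n ≤ d z := by
        intro z n hn
        apply Nat.le_findGreatest _ hn
        have h1 := pa_length_le hT hn
        rw [hlen n] at h1
        exact h1
      have hd2 : ∀ z, v (d z) ∈ (pa hT r z).support := by
        intro z
        have h0 : (fun n => v n ∈ (pa hT r z).support) 0 := by
          simp only []
          rw [hv0]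
          exact (pa hT r z).start_mem_support
        exact Nat.findGreatest_spec (P := fun n => v n ∈ (pa hT r z).support)
          (Nat.zero_le (pa hT r z).length) h0
      have hclaim : ∀ m, ((Below (v m)) \ Set.range v).Infinite := by
        intro m
        have h1 : (Below (v m) \ (X ∩ Set.range v)).Infinite := (good m).diff hrayX
        apply Set.Infinite.mono _ h1
        intro z hz
        exact ⟨hz.1, fun hc => hz.2 ⟨hz.1.1, hc⟩⟩
      set x : ℕ → V := fun k => Nat.rec (hclaim 0).nonempty.some
          (fun _ z => (hclaim (d z + 1)).nonempty.some) k with hxdef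
      have hx0 : x 0 ∈ Below (v 0) \ Set.range v := (hclaim 0).nonempty.some_mem
      have hxs : ∀ k, x (k+1) ∈ Below (v (d (x k) + 1)) \ Set.range v := fun k =>
        (hclaim (d (x k) + 1)).nonempty.some_mem
      have hxX : ∀ k, x k ∈ X ∧ x k ∉ Set.range v := by
        intro k
        cases k with
        | zero => exact ⟨hx0.1.1, hx0.2⟩
        | succ k => exact ⟨(hxs k).1.1, (hxs k).2⟩
      have hmono : StrictMono (fun k => d (x k)) := by
        apply strictMono_nat_of_lt_succ
        intro k
        have h1 : v (d (x k) + 1) ∈ (pa hT r (x (k+1))).support := (hxs k).1.2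
        have h2 := hd1 _ _ h1
        omega
      have hxinj : Function.Injective x := by
        intro a b hab
        have : d (x a) = d (x b) := by rw [hab]
        exact hmono.injective this
      have hner : ∀ k, x k ≠ r := by
        intro k hc
        exact (hxX k).2 ⟨0, hv0.trans hc.symm⟩
      have hsep : ∀ j k, j ≠ k → x k ∉ (pa hT r (x j)).support := by
        intro j k hjk hmem'
        have hdne : d (x j) ≠ d (x k) := fun h => hjk (hmono.injective h)
        rcases lt_or_gt_of_ne hdne with hlt | hgt
        · have h1 : v (d (x k)) ∈ (pa hT r (x k)).support := hd2 _
          have h2 : v (d (x k)) ∈ (pa hT r (x j)).support :=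
            pa_support_subset hT hmem' _ h1
          have h3 := hd1 _ _ h2
          omega
        · have hDJ : v (d (x j)) ∈ (pa hT r (x j)).support := hd2 _
          have hsplit : v (d (x j)) ∈ ((pa hT r (x j)).takeUntil (x k) hmem').support ∨
              v (d (x j)) ∈ ((pa hT r (x j)).dropUntil (x k) hmem').support := by
            rw [← Walk.mem_support_append_iff, Walk.take_spec]
            exact hDJ
          rcases hsplit with hcase | hcase
          · rw [← pa_takeUntil hT hmem'] at hcase
            have h3 := hd1 _ _ hcase
            omega
          · have happ : ((pa hT r (x k)).append
                ((((pa hT r (x j)).dropUntil (x k) hmem')).takeUntil (v (d (x j))) hcase)).IsPath := by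
              apply Walk.IsPath.of_append_left
                (q := ((pa hT r (x j)).dropUntil (x k) hmem').dropUntil (v (d (x j))) hcase)
              rw [← Walk.append_assoc, Walk.take_spec, pa_takeUntil hT hmem', Walk.take_spec]
              exact pa_isPath hT r (x j)
            have heq : (pa hT r (x k)).append
                ((((pa hT r (x j)).dropUntil (x k) hmem')).takeUntil (v (d (x j))) hcase) =
                pa hT r (v (d (x j))) := pa_unique hT happ
            have hxk : x k ∈ (pa hT r (v (d (x j)))).support := by
              rw [← heq, Walk.mem_support_append_iff]
              exact Or.inl (pa hT r (x k)).end_mem_support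
            exact (hxX k).2 (hsupp _ _ hxk)
      exact TreeRayAux.leafy hT X r x hxinj (fun k => (hxX k).1) hner hsep
  · -- star case
    right
    push_neg at hstep
    obtain ⟨v, hv, h2⟩ := hstep
    have hvS : v ∈ (pa hT r v).support := (pa hT r v).end_mem_support
    have hfinPv : {z : V | z ∈ (pa hT r v).support}.Finite := (pa hT r v).support.finite_toSet
    have hDinf : (Below v \ {z : V | z ∈ (pa hT r v).support}).Infinite := hv.diff hfinPv
    set D : Set V := Below v \ {z : V | z ∈ (pa hT r v).support} with hDdef
    have hDfact : ∀ z ∈ D, z ∈ X ∧ v ∈ (pa hT r z).support ∧ z ∉ (pa hT r v).support ∧ z ≠ v := by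
      intro z hz
      refine ⟨hz.1.1, hz.1.2, hz.2, ?_⟩
      intro hc; exact hz.2 (hc ▸ hvS)
    have hdec : ∀ z : V, ∃ w : V, z ≠ v → ∃ (h : T.Adj v w) (q : T.Walk w z),
        pa hT v z = Walk.cons h q := by
      intro z
      by_cases hz : z = v
      · exact ⟨v, fun hc => absurd hz hc⟩
      · obtain ⟨w, h, q, hq⟩ := Walk.exists_eq_cons_of_ne (Ne.symm hz) (pa hT v z)
        exact ⟨w, fun _ => ⟨h, q, hq⟩⟩
    choose w_ hw_spec using hdec
    have hadjw : ∀ z (hz : z ≠ v), T.Adj v (w_ z) := fun z hz => (hw_spec z hz).choose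
    have hwmem : ∀ z (hz : z ≠ v), w_ z ∈ (pa hT v z).support := by
      intro z hz
      obtain ⟨h, q, hq⟩ := hw_spec z hz
      rw [hq, Walk.support_cons]
      exact List.mem_cons_of_mem _ q.start_mem_support
    have hdecomp : ∀ z (h : v ∈ (pa hT r z).support),
        pa hT r z = (pa hT r v).append (pa hT v z) := by
      intro z h
      have h1 : pa hT r v = (pa hT r z).takeUntil v h := pa_takeUntil hT h
      have h2' : pa hT v z = (pa hT r z).dropUntil v h :=
        (pa_unique hT ((pa_isPath hT r z).dropUntil h)).symm
      rw [h1, h2', Walk.take_spec]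
    have hwD : ∀ z ∈ D, w_ z ∉ (pa hT r v).support ∧ w_ z ∈ (pa hT r z).support := by
      intro z hz
      obtain ⟨hzX, hzv, hznP, hzne⟩ := hDfact z hz
      have hdc := hdecomp z hzv
      have hnodup : ((pa hT r v).support ++ (pa hT v z).support.tail).Nodup := by
        rw [← Walk.support_append, ← hdc]
        exact (pa_isPath hT r z).support_nodup
      have hdisj := List.disjoint_of_nodup_append hnodup
      have hwtail : w_ z ∈ (pa hT v z).support.tail := by
        have hmm := hwmem z hzne
        rw [(pa hT v z).support_eq_cons] at hmm
        rcases List.mem_cons.1 hmm with h' | h'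
        · exact absurd h' (hadjw z hzne).ne'
        · exact h'
      constructor
      · intro hcon
        exact hdisj hcon hwtail
      · rw [hdc, Walk.mem_support_append_iff]
        exact Or.inr (hwmem z hzne)
    have hbranch : ∀ z z', z ≠ v → z' ≠ v → z' ∈ (pa hT v z).support → w_ z' = w_ z := by
      intro z z' hz hz' hmem
      obtain ⟨h, q, hq⟩ := hw_spec z hz
      have hz'q : z' ∈ q.support := by
        rw [hq, Walk.support_cons] at hmem
        rcases List.mem_cons.1 hmem with h' | h'
        · exact absurd h' hz'
        · exact h'
      have hQpath := pa_isPath hT v z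
      rw [hq, Walk.cons_isPath_iff] at hQpath
      have htake : (Walk.cons h (q.takeUntil z' hz'q)).IsPath := by
        apply Walk.IsPath.cons (hQpath.1.takeUntil hz'q)
        intro hcon
        exact hQpath.2 (q.support_takeUntil_subset hz'q hcon)
      have hPz' : Walk.cons h (q.takeUntil z' hz'q) = pa hT v z' := pa_unique hT htake
      obtain ⟨h', q', hq'⟩ := hw_spec z' hz'
      have e1 : (pa hT v z').support.tail.head? = some (w_ z) := head_of_cons hPz'.symm
      have e2 : (pa hT v z').support.tail.head? = some (w_ z') := head_of_cons hq'
      rw [e1] at e2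
      exact (Option.some.inj e2).symm
    have hfiber : ∀ w : V, (D ∩ {z | w_ z = w}).Finite := by
      intro w
      rcases Set.eq_empty_or_nonempty (D ∩ {z | w_ z = w}) with he | ⟨z₀, hz₀D, hz₀w⟩
      · rw [he]; exact Set.finite_empty
      · have hz₀ := hDfact z₀ hz₀D
        have hadj0 : T.Adj v w := hz₀w ▸ hadjw z₀ hz₀.2.2.2
        have hwP : w ∉ (pa hT r v).support := hz₀w ▸ (hwD z₀ hz₀D).1
        have hfin := h2 w hadj0 hwP
        apply hfin.subset
        rintro z ⟨hzD, hzw⟩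
        have hz := hDfact z hzD
        exact ⟨hz.1, hzw ▸ (hwD z hzD).2⟩
    have himg : (w_ '' D).Infinite := by
      intro hfin
      apply hDinf
      have hsub : D ⊆ ⋃ w ∈ w_ '' D, (D ∩ {z | w_ z = w}) := by
        intro z hz
        exact Set.mem_biUnion (Set.mem_image_of_mem _ hz) ⟨hz, rfl⟩
      exact ((hfin.biUnion (fun w _ => hfiber w)).subset hsub)
    have hsel : ∀ k : ℕ, ∃ z, z ∈ D ∧ w_ z = ((Set.Infinite.natEmbedding _ himg) k).1 := by
      intro k
      obtain ⟨z, hz, hzw⟩ := (Set.mem_image _ _ _).1 ((Set.Infinite.natEmbedding _ himg) k).2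
      exact ⟨z, hz, hzw⟩
    choose x hxD hxw using hsel
    have hxne : ∀ k, x k ≠ v := fun k => (hDfact _ (hxD k)).2.2.2
    have hxinj : Function.Injective x := by
      intro a b hab
      have hww : w_ (x a) = w_ (x b) := by rw [hab]
      rw [hxw a, hxw b] at hww
      exact (Set.Infinite.natEmbedding _ himg).injective (Subtype.coe_injective hww)
    have hsep : ∀ j k, j ≠ k → x k ∉ (pa hT v (x j)).support := by
      intro j k hjk hmem
      have hww := hbranch (x j) (x k) (hxne j) (hxne k) hmem
      rw [hxw k, hxw j] at hww
      exact hjk ((Set.Infinite.natEmbedding _ himg).injective (Subtype.coe_injective hww)).symm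
    exact TreeRayAux.leafy hT X v x hxinj (fun k => (hDfact _ (hxD k)).1) hxne hsep
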